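/- Let n ≥ 1 and let x_k, m_k : ℝ → ℝ (k = 1, …, n) be differentiable functions satisfying the ODE system ẋ_k(t) = Σ_{i=1}^n m_i(t) |x_k(t) − x_i(t)| and ṁ_k(t) = 2 Σ_{i=1}^n m_k(t) m_i(t) sgn(x_i(t) − x_k(t)) for all t, where sgn 0 = 0. Then the functions M(t) = Σ_{k=1}^n m_k(t) and M_+(t) = Σ_{k=1}^n m_k(t) x_k(t) are constant in t. -/

import Mathlib

lemma sum_antisymm_aux {n : ℕ} (f : Fin n → Fin n → ℝ)
    (h : ∀ k i, f k i + f i k = 0) : ∑ k, ∑ i, f k i = 0 := by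
  have e : ∑ k, ∑ i, f k i = ∑ k, ∑ i, f i k := Finset.sum_comm ..
  have h2 : (∑ k, ∑ i, f k i) + (∑ k, ∑ i, f i k) = 0 := by
    rw [← Finset.sum_add_distrib]
    have : ∀ k ∈ Finset.univ, (∑ i, f k i) + (∑ i, f i k) = 0 := by
      intro k _
      rw [← Finset.sum_add_distrib]
      simp [h]
    rw [Finset.sum_congr rfl this]
    simp
  linarith

lemma sign_mul_self_eq_abs (a : ℝ) : Real.sign a * a = |a| := by
  rcases lt_trichotomy a 0 with h | h | h
  · rw [Real.sign_of_neg h, abs_of_neg h]; ring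
  · simp [h]
  · rw [Real.sign_of_pos h, abs_of_pos h]; ring

/-- **Conservation of `M` and `M₊` for the derivative Burgers peakon ODEs.**
If `x k, m k : ℝ → ℝ` satisfy
`ẋ_k = Σ_i m_i |x_k − x_i|` and `ṁ_k = 2 Σ_i m_k m_i sgn(x_i − x_k)` (with `sgn 0 = 0`),
then `M(t) = Σ_k m_k(t)` and `M₊(t) = Σ_k m_k(t) x_k(t)` are constant in `t`. -/
theorem stmt0 (n : ℕ) (hn : 1 ≤ n) (x m : Fin n → ℝ → ℝ)
    (hx : ∀ (k : Fin n) (t : ℝ),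
      HasDerivAt (x k) (∑ i, m i t * |x k t - x i t|) t)
    (hm : ∀ (k : Fin n) (t : ℝ),
      HasDerivAt (m k) (2 * ∑ i, m k t * m i t * Real.sign (x i t - x k t)) t) :
    (∀ s t : ℝ, ∑ k, m k s = ∑ k, m k t) ∧
    (∀ s t : ℝ, ∑ k, m k s * x k s = ∑ k, m k t * x k t) := by
  have hM : ∀ t, HasDerivAt (fun t => ∑ k, m k t) 0 t := by
    intro t
    have h1 : HasDerivAt (fun t => ∑ k, m k t)
        (∑ k, 2 * ∑ i, m k t * m i t * Real.sign (x i t - x k t)) t :=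
      HasDerivAt.fun_sum (fun k _ => hm k t)
    convert h1 using 1
    symm
    have : ∀ k : Fin n, 2 * ∑ i, m k t * m i t * Real.sign (x i t - x k t)
        = ∑ i, 2 * (m k t * m i t * Real.sign (x i t - x k t)) := by
      intro k; rw [Finset.mul_sum]
    simp_rw [this]
    apply sum_antisymm_aux
    intro k i
    have hs : x k t - x i t = -(x i t - x k t) := by ring
    rw [hs, Real.sign_neg]
    ring
  have hMp : ∀ t, HasDerivAt (fun t => ∑ k, m k t * x k t) 0 t := by
    intro t
    have h1 : HasDerivAt (fun t => ∑ k, m k t * x k t)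
        (∑ k, ((2 * ∑ i, m k t * m i t * Real.sign (x i t - x k t)) * x k t
          + m k t * ∑ i, m i t * |x k t - x i t|)) t :=
      HasDerivAt.fun_sum (fun k _ => (hm k t).mul (hx k t))
    convert h1 using 1
    symm
    have : ∀ k : Fin n, (2 * ∑ i, m k t * m i t * Real.sign (x i t - x k t)) * x k t
          + m k t * ∑ i, m i t * |x k t - x i t|
        = ∑ i, (2 * (m k t * m i t * Real.sign (x i t - x k t)) * x k t
          + m k t * (m i t * |x k t - x i t|)) := by
      intro k
      rw [Finset.sum_add_distrib, Finset.mul_sum, ← Finset.sum_mul, Finset.mul_sum]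
    simp_rw [this]
    apply sum_antisymm_aux
    intro k i
    have h1 : Real.sign (x k t - x i t) = - Real.sign (x i t - x k t) := by
      rw [show x k t - x i t = -(x i t - x k t) by ring, Real.sign_neg]
    have h2 : |x i t - x k t| = |x k t - x i t| := abs_sub_comm _ _
    have hsa : Real.sign (x i t - x k t) * (x i t - x k t) = |x i t - x k t| :=
      sign_mul_self_eq_abs _
    rw [h2] at hsa
    rw [h1, h2]
    linear_combination (-(2 * m k t * m i t)) * hsa
  refine ⟨?_, ?_⟩
  · intro s t
    exact is_const_of_deriv_eq_zero (fun u => (hM u).differentiableAt)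
      (fun u => (hM u).deriv) s t
  · intro s t
    exact is_const_of_deriv_eq_zero (fun u => (hMp u).differentiableAt)
      (fun u => (hMp u).deriv) s t
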